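/- Fourier's rule (positive part): for every nonzero real polynomial P, the number of positive real roots of P counted with multiplicity has the same parity as the number of sign alternations of P; that is, z⁺(P) ≡ v(P) (mod 2). -/

import Mathlib

open Polynomial

/-- Number of sign changes in a list of reals, after discarding zero entries:
the number of consecutive pairs with negative product. -/
noncomputable def signChanges (l : List ℝ) : ℕ :=
  let l' := l.filter (fun x => decide (x ≠ 0))
  (l'.zip l'.tail).countP (fun p => decide (p.1 * p.2 < 0))

/-- `v(P)`: number of sign changes in the sequence of nonzero coefficients of `P`,
listed in order of increasing degree. -/
noncomputable def v (P : Polynomial ℝ) : ℕ :=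
  signChanges (List.ofFn fun i : Fin (P.natDegree + 1) => P.coeff i)

/-- `c(P) := v(P(-X))`: the number of sign permanences of `P` (minimization convention). -/
noncomputable def c (P : Polynomial ℝ) : ℕ :=
  v (P.comp (-Polynomial.X))

/-- `z⁺(P)`: number of positive real roots of `P`, with multiplicity. -/
noncomputable def zpos (P : Polynomial ℝ) : ℕ :=
  (P.roots.filter (fun x => 0 < x)).card

/-- `z⁻(P)`: number of negative real roots of `P`, with multiplicity. -/
noncomputable def zneg (P : Polynomial ℝ) : ℕ :=
  (P.roots.filter (fun x => x < 0)).card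

/-! ### Auxiliary lemmas -/

private lemma chain_parity : ∀ (l : List ℝ) (a : ℝ), a ≠ 0 → (∀ x ∈ l, x ≠ 0) →
    (((a :: l).zip l).countP (fun p => decide (p.1 * p.2 < 0))) % 2
      = if a * (a :: l).getLast (by simp) < 0 then 1 else 0
  | [], a, ha, _ => by
      have : ¬ a * a < 0 := not_lt.2 (le_of_lt (mul_self_pos.2 ha))
      simp [List.countP, List.countP.go, this]
  | b :: t, a, ha, h => by
      have hb : b ≠ 0 := h b (by simp)
      have ih := chain_parity t b hb (fun x hx => h x (List.mem_cons_of_mem _ hx))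
      have hne : (b :: t) ≠ [] := by simp
      set L := (b :: t).getLast hne with hLdef
      have hL : L ≠ 0 := h _ (List.getLast_mem hne)
      have hlast : (a :: b :: t).getLast (by simp) = L := List.getLast_cons hne
      rw [List.zip_cons_cons, List.countP_cons, hlast]
      have hb2 : (0:ℝ) < b * b := mul_self_pos.2 hb
      have habne : a * b ≠ 0 := mul_ne_zero ha hb
      have hbLne : b * L ≠ 0 := mul_ne_zero hb hL
      have key : (a * b) * (b * L) = (a * L) * (b * b) := by ring
      rw [Nat.add_mod, ih]
      by_cases h1 : a * b < 0 <;> by_cases h2 : b * L < 0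
      · have hab : a * b < 0 := h1
        have haL : ¬ a * L < 0 := by nlinarith
        simp [h1, h2, haL]
      · have h2' : 0 < b * L := lt_of_le_of_ne (not_lt.1 h2) (Ne.symm hbLne)
        have haL : a * L < 0 := by nlinarith
        simp [h1, h2, haL]
      · have h1' : 0 < a * b := lt_of_le_of_ne (not_lt.1 h1) (Ne.symm habne)
        have haL : a * L < 0 := by nlinarith
        simp [h1, h2, haL]
      · have h1' : 0 < a * b := lt_of_le_of_ne (not_lt.1 h1) (Ne.symm habne)
        have h2' : 0 < b * L := lt_of_le_of_ne (not_lt.1 h2) (Ne.symm hbLne)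
        have haL : ¬ a * L < 0 := by nlinarith
        simp [h1, h2, haL]

private lemma ofFn_coeff_eq_map (P : Polynomial ℝ) :
    (List.ofFn fun i : Fin (P.natDegree + 1) => P.coeff i)
      = (List.range (P.natDegree + 1)).map (fun i => P.coeff i) := by
  apply List.ext_getElem
  · simp
  · intro i h1 h2
    simp only [List.getElem_ofFn, List.getElem_map, List.getElem_range]

private lemma filter_decomp (P : Polynomial ℝ) (hP : P ≠ 0) :
    ∃ rest : List ℝ,
      (List.ofFn fun i : Fin (P.natDegree + 1) => P.coeff i).filter
          (fun x => decide (x ≠ 0)) = P.trailingCoeff :: rest ∧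
      (∀ x ∈ rest, x ≠ 0) ∧
      (P.trailingCoeff :: rest).getLast (by simp) = P.leadingCoeff := by
  classical
  set n := P.natDegree with hn
  set t := P.natTrailingDegree with htdef
  have ht : t ≤ n := P.natTrailingDegree_le_natDegree
  have htc : P.coeff t ≠ 0 := fun h => hP (Polynomial.coeff_natTrailingDegree_eq_zero.1 h)
  have hsplit : n + 1 = t + (n - t + 1) := by omega
  have hrange : List.range (n + 1)
      = List.range t ++ (List.range (n - t + 1)).map (fun x => t + x) := by
    rw [hsplit, List.range_add]
  have hL : (List.ofFn fun i : Fin (P.natDegree + 1) => P.coeff i)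
      = ((List.range t).map (fun i => P.coeff i))
        ++ ((List.range (n - t + 1)).map (fun x => P.coeff (t + x))) := by
    rw [ofFn_coeff_eq_map, hrange, List.map_append, List.map_map]
    rfl
  have hzero : ((List.range t).map (fun i => P.coeff i)).filter
      (fun x => decide (x ≠ 0)) = [] := by
    rw [List.filter_eq_nil_iff]
    intro a ha
    rcases List.mem_map.1 ha with ⟨i, hi, rfl⟩
    have hz : P.coeff i = 0 :=
      Polynomial.coeff_eq_zero_of_lt_natTrailingDegree (List.mem_range.1 hi)
    simp [hz]
  have hrange2 : List.range (n - t + 1) = 0 :: (List.range (n - t)).map Nat.succ :=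
    List.range_succ_eq_map (n := n - t)
  set restlist := ((List.range (n - t)).map (fun x => P.coeff (t + Nat.succ x))).filter
      (fun x => decide (x ≠ 0)) with hrl
  have hfilter : (List.ofFn fun i : Fin (P.natDegree + 1) => P.coeff i).filter
      (fun x => decide (x ≠ 0)) = P.coeff t :: restlist := by
    rw [hL, List.filter_append, hzero, List.nil_append, hrange2]
    rw [List.map_cons, List.filter_cons]
    have hpt : (decide (P.coeff (t + 0) ≠ 0)) = true := by
      simp only [Nat.add_zero]; simp [htc]
    rw [if_pos hpt, List.map_map]
    simp only [Nat.add_zero]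
    rfl
  refine ⟨restlist, hfilter, ?_, ?_⟩
  · intro x hx
    have := (List.mem_filter.1 hx).2
    simpa using this
  · have hlast : ((List.ofFn fun i : Fin (P.natDegree + 1) => P.coeff i).filter
        (fun x => decide (x ≠ 0))).getLast? = some P.leadingCoeff := by
      have hL2 : (List.ofFn fun i : Fin (P.natDegree + 1) => P.coeff i)
          = ((List.range n).map (fun i => P.coeff i)) ++ [P.coeff n] := by
        rw [ofFn_coeff_eq_map, List.range_succ, List.map_append]
        rfl
      have hlc : P.coeff n ≠ 0 := Polynomial.leadingCoeff_ne_zero.2 hP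
      rw [hL2, List.filter_append]
      have hone : [P.coeff n].filter (fun x => decide (x ≠ 0)) = [P.coeff n] := by
        simp [hlc]
      rw [hone, List.getLast?_concat]
      rfl
    rw [hfilter] at hlast
    rw [List.getLast?_eq_getLast (l := P.coeff t :: restlist) (by simp)] at hlast
    exact Option.some.inj hlast

private lemma v_parity (P : Polynomial ℝ) (hP : P ≠ 0) :
    v P % 2 = if P.trailingCoeff * P.leadingCoeff < 0 then 1 else 0 := by
  obtain ⟨rest, hf, hrest, hlast⟩ := filter_decomp P hP
  have htc : P.trailingCoeff ≠ 0 := fun h => hP (Polynomial.trailingCoeff_eq_zero.1 h)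
  have := chain_parity rest P.trailingCoeff htc hrest
  rw [hlast] at this
  unfold v signChanges
  simp only [hf]
  exact this

private lemma no_roots_sign (P : Polynomial ℝ) (hP : P ≠ 0) (h : P.roots = 0) :
    0 < P.eval 0 * P.leadingCoeff := by
  have hnr : ∀ x : ℝ, P.eval x ≠ 0 := by
    intro x hx
    have : x ∈ P.roots := by
      rw [Polynomial.mem_roots hP]; exact hx
    rw [h] at this; simp at this
  by_cases hdeg : P.degree ≤ 0
  · have hPe := Polynomial.eq_C_of_degree_le_zero hdeg
    have h0 : P.eval 0 = P.coeff 0 := (Polynomial.coeff_zero_eq_eval_zero P).symm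
    have hl : P.leadingCoeff = P.coeff 0 := by
      conv_lhs => rw [hPe]
      simp
    rw [h0, hl]
    exact mul_self_pos.2 (fun hc => hnr 0 (by rw [h0, hc]))
  · push_neg at hdeg
    rcases lt_or_gt_of_ne (Polynomial.leadingCoeff_ne_zero.2 hP) with hlc | hlc
    · -- leading coefficient negative
      have htend := Polynomial.tendsto_atBot_of_leadingCoeff_nonpos P hdeg hlc.le
      obtain ⟨M, hM1, hM2⟩ :=
        ((htend.eventually_lt_atBot 0).and (Filter.eventually_gt_atTop 0)).exists
      have he0 : P.eval 0 < 0 := by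
        by_contra hcon
        push_neg at hcon
        have he0' : 0 < P.eval 0 := lt_of_le_of_ne hcon (Ne.symm (hnr 0))
        have := intermediate_value_Ioo' (le_of_lt hM2)
          ((Polynomial.continuous P).continuousOn (s := Set.Icc 0 M))
        have h0mem : (0:ℝ) ∈ Set.Ioo (P.eval M) (P.eval 0) := ⟨hM1, he0'⟩
        obtain ⟨x, _, hx⟩ := this h0mem
        exact hnr x hx
      nlinarith
    · -- leading coefficient positive
      have htend := Polynomial.tendsto_atTop_of_leadingCoeff_nonneg P hdeg hlc.le
      obtain ⟨M, hM1, hM2⟩ :=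
        ((htend.eventually_gt_atTop 0).and (Filter.eventually_gt_atTop 0)).exists
      have he0 : 0 < P.eval 0 := by
        by_contra hcon
        push_neg at hcon
        have he0' : P.eval 0 < 0 := lt_of_le_of_ne hcon (hnr 0)
        have := intermediate_value_Ioo (le_of_lt hM2)
          ((Polynomial.continuous P).continuousOn (s := Set.Icc 0 M))
        have h0mem : (0:ℝ) ∈ Set.Ioo (P.eval 0) (P.eval M) := ⟨he0', hM1⟩
        obtain ⟨x, _, hx⟩ := this h0mem
        exact hnr x hx
      nlinarith

private lemma trailing_eq_eval_zero (P : Polynomial ℝ) (h0 : P.coeff 0 ≠ 0) :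
    P.trailingCoeff = P.coeff 0 := by
  have : P.natTrailingDegree = 0 := Polynomial.natTrailingDegree_eq_zero.2 (Or.inr h0)
  rw [Polynomial.trailingCoeff, this]

private lemma zpos_parity : ∀ (n : ℕ) (P : Polynomial ℝ), P ≠ 0 → Multiset.card P.roots = n →
    zpos P % 2 = if P.trailingCoeff * P.leadingCoeff < 0 then 1 else 0 := by
  intro n
  induction n with
  | zero =>
      intro P hP hcard
      have hroots : P.roots = 0 := Multiset.card_eq_zero.1 hcard
      have hz : zpos P = 0 := by
        unfold zpos
        rw [hroots]; simp
      have h0 : P.coeff 0 ≠ 0 := by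
        intro hc
        have hir : P.IsRoot 0 := by
          rw [Polynomial.IsRoot, ← Polynomial.coeff_zero_eq_eval_zero]; exact hc
        have : (0:ℝ) ∈ P.roots := (Polynomial.mem_roots hP).2 hir
        rw [hroots] at this; simp at this
      have hsign := no_roots_sign P hP hroots
      have heval : P.eval 0 = P.coeff 0 := (Polynomial.coeff_zero_eq_eval_zero P).symm
      rw [trailing_eq_eval_zero P h0]
      rw [heval] at hsign
      rw [hz]
      simp [not_lt.2 hsign.le]
  | succ n ih =>
      intro P hP hcard
      have hpos : 0 < Multiset.card P.roots := by omega
      obtain ⟨r, hr⟩ := Multiset.card_pos_iff_exists_mem.1 hpos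
      have hroot : P.IsRoot r := Polynomial.isRoot_of_mem_roots hr
      obtain ⟨Q, hQ⟩ := Polynomial.dvd_iff_isRoot.2 hroot
      have hQne : Q ≠ 0 := by
        intro h; rw [h, mul_zero] at hQ; exact hP hQ
      have hXr : (X - C r) ≠ 0 := Polynomial.X_sub_C_ne_zero r
      have hroots : P.roots = {r} + Q.roots := by
        rw [hQ, Polynomial.roots_mul (hQ ▸ hP), Polynomial.roots_X_sub_C]
      have hcardQ : Multiset.card Q.roots = n := by
        rw [hroots] at hcard
        simp at hcard
        omega
      have ihQ := ih Q hQne hcardQ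
      have hlead : P.leadingCoeff = Q.leadingCoeff := by
        rw [hQ, Polynomial.leadingCoeff_mul, (Polynomial.monic_X_sub_C r).leadingCoeff, one_mul]
      have hQtl : Q.trailingCoeff * Q.leadingCoeff ≠ 0 :=
        mul_ne_zero (fun h => hQne (Polynomial.trailingCoeff_eq_zero.1 h))
          (Polynomial.leadingCoeff_ne_zero.2 hQne)
      have hzposP : zpos P = (Multiset.filter (fun x => 0 < x) {r}).card + zpos Q := by
        unfold zpos
        rw [hroots, Multiset.filter_add, Multiset.card_add]
      rcases lt_trichotomy r 0 with hr0 | hr0 | hr0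
      · -- negative root
        have hfilt : Multiset.filter (fun x => (0:ℝ) < x) {r} = 0 := by
          rw [Multiset.filter_singleton, if_neg (not_lt.2 hr0.le)]; rfl
        have htr : (X - C r).trailingCoeff = -r := by
          have hc0 : (X - C r).coeff 0 = -r := by simp
          rw [trailing_eq_eval_zero _ (by rw [hc0]; exact neg_ne_zero.2 (ne_of_lt hr0)), hc0]
        have htP : P.trailingCoeff = -r * Q.trailingCoeff := by
          rw [hQ, Polynomial.trailingCoeff_mul, htr]
        have hprod : P.trailingCoeff * P.leadingCoeff
            = -r * (Q.trailingCoeff * Q.leadingCoeff) := by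
          rw [htP, hlead]; ring
        have hrpos : (0:ℝ) < -r := neg_pos.2 hr0
        have hiff : P.trailingCoeff * P.leadingCoeff < 0 ↔
            Q.trailingCoeff * Q.leadingCoeff < 0 := by
          rw [hprod]
          constructor <;> intro h <;> nlinarith
        rw [hzposP, hfilt]
        simp only [Multiset.card_zero, Nat.zero_add]
        rw [ihQ, if_congr hiff rfl rfl]
      · -- zero root
        subst hr0
        have hfilt : Multiset.filter (fun x => (0:ℝ) < x) {(0:ℝ)} = 0 := by
          rw [Multiset.filter_singleton, if_neg (lt_irrefl 0)]; rfl
        have htr : (X - C (0:ℝ)).trailingCoeff = 1 := by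
          simp only [map_zero, sub_zero]
          rw [Polynomial.trailingCoeff, Polynomial.natTrailingDegree_X, Polynomial.coeff_X_one]
        have htP : P.trailingCoeff = Q.trailingCoeff := by
          rw [hQ, Polynomial.trailingCoeff_mul, htr, one_mul]
        rw [hzposP, hfilt]
        simp only [Multiset.card_zero, Nat.zero_add]
        rw [ihQ, htP, hlead]
      · -- positive root
        have hfilt : Multiset.filter (fun x => (0:ℝ) < x) {r} = {r} := by
          rw [Multiset.filter_singleton, if_pos hr0]
        have htr : (X - C r).trailingCoeff = -r := by
          have hc0 : (X - C r).coeff 0 = -r := by simp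
          rw [trailing_eq_eval_zero _ (by rw [hc0]; exact neg_ne_zero.2 (ne_of_gt hr0)), hc0]
        have htP : P.trailingCoeff = -r * Q.trailingCoeff := by
          rw [hQ, Polynomial.trailingCoeff_mul, htr]
        have hprod : P.trailingCoeff * P.leadingCoeff
            = -r * (Q.trailingCoeff * Q.leadingCoeff) := by
          rw [htP, hlead]; ring
        have hrneg : -r < (0:ℝ) := by linarith
        have hiff : P.trailingCoeff * P.leadingCoeff < 0 ↔
            ¬ (Q.trailingCoeff * Q.leadingCoeff < 0) := by
          rw [hprod]
          constructor
          · intro h hcon; nlinarith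
          · intro h
            have : 0 < Q.trailingCoeff * Q.leadingCoeff :=
              lt_of_le_of_ne (not_lt.1 h) (Ne.symm hQtl)
            nlinarith
        rw [hzposP, hfilt]
        simp only [Multiset.card_singleton]
        by_cases hq : Q.trailingCoeff * Q.leadingCoeff < 0
        · rw [if_neg (fun h => (hiff.1 h) hq)]
          rw [if_pos hq] at ihQ
          omega
        · rw [if_pos (hiff.2 hq)]
          rw [if_neg hq] at ihQ
          omega

/-- Fourier's rule (positive part): `z⁺(P) ≡ v(P) (mod 2)`. -/
theorem fourier_rule_pos (P : Polynomial ℝ) (hP : P ≠ 0) :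
    zpos P % 2 = v P % 2 := by
  rw [zpos_parity (Multiset.card P.roots) P hP rfl, v_parity P hP]
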